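/- Let λ_{i1} > 0, λ_{i2} ≥ 0, μ_i > 0 for i = 1, 2. Then the ratio t ↦ φ^W_1(t)/φ^W_2(t) is monotone increasing on (0, ∞) (i.e. τ^W_1 ≥_lr τ^W_2) if and only if 2(λ₂₁ − λ₁₁) − λ₁₂ + λ₂₂ + μ₂ − μ₁ ≥ max(a₂ − a₁, 0). -/

import Mathlib

/-- `a_i = sqrt((λ_{i2} + μ_i)² + 4 λ_{i1} μ_i)` for the warm standby system. -/
noncomputable def aW (l1 l2 m : ℝ) : ℝ := Real.sqrt ((l2 + m) ^ 2 + 4 * l1 * m)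

/-- Density of the lifetime of the Markovian two-unit warm standby system. -/
noncomputable def phiW (l1 l2 m t : ℝ) : ℝ :=
  Real.exp (-((2 * l1 + l2 + m) * t / 2)) * (2 * l1 * (l1 + l2) / aW l1 l2 m) *
    Real.sinh (aW l1 l2 m * t / 2)

open Real Set Filter Topology

section Aux

lemma WLR.convexOn_sinh_Ici : ConvexOn ℝ (Ici 0) Real.sinh :=
  MonotoneOn.convexOn_of_deriv (convex_Ici 0) Real.continuous_sinh.continuousOn
    Real.differentiable_sinh.differentiableOn (by
      rw [Real.deriv_sinh, interior_Ici]
      exact (Real.cosh_strictMonoOn.monotoneOn).mono Ioi_subset_Ici_self)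

lemma WLR.L1 {p q : ℝ} (hp : 0 ≤ p) (hpq : p ≤ q) : q * Real.sinh p ≤ p * Real.sinh q := by
  rcases eq_or_lt_of_le hp with rfl | hp
  · simp
  have hq : 0 < q := hp.trans_le hpq
  have h := WLR.convexOn_sinh_Ici.secant_mono (a := 0) (x := p) (y := q)
    self_mem_Ici hp.le hq.le hp.ne' hq.ne' hpq
  simp only [Real.sinh_zero, sub_zero] at h
  have := (div_le_div_iff₀ hp hq).1 h
  linarith

lemma WLR.L2 {p q : ℝ} (hp : 0 ≤ p) (hpq : p ≤ q) :
    q * (Real.exp p - 1) ≤ p * (Real.exp q - 1) := by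
  rcases eq_or_lt_of_le hp with rfl | hp
  · simp
  have hq : 0 < q := hp.trans_le hpq
  have h := convexOn_exp.secant_mono (a := 0) (x := p) (y := q)
    trivial trivial trivial hp.ne' hq.ne' hpq
  simp only [Real.exp_zero, sub_zero] at h
  have := (div_le_div_iff₀ hp hq).1 h
  linarith

lemma WLR.sinh_le_mul_cosh {x : ℝ} (hx : 0 ≤ x) : Real.sinh x ≤ x * Real.cosh x := by
  have hd : ∀ y : ℝ, HasDerivAt (fun z => z * Real.cosh z - Real.sinh z) (y * Real.sinh y) y := by
    intro y
    have h1 := (hasDerivAt_id y).mul (Real.hasDerivAt_cosh y)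
    have h2 := h1.sub (Real.hasDerivAt_sinh y)
    refine h2.congr_deriv ?_
    simp [mul_comm]; try ring
  have hmono : MonotoneOn (fun z => z * Real.cosh z - Real.sinh z) (Ici 0) := by
    apply monotoneOn_of_deriv_nonneg (convex_Ici 0)
    · exact (Continuous.sub (continuous_id.mul Real.continuous_cosh)
        Real.continuous_sinh).continuousOn
    · exact fun y _ => (hd y).differentiableAt.differentiableWithinAt
    · intro y hy
      rw [interior_Ici, mem_Ioi] at hy
      rw [(hd y).deriv]
      exact mul_nonneg hy.le (Real.sinh_nonneg_iff.2 hy.le)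
  have := hmono self_mem_Ici hx hx
  simpa using this

lemma WLR.mul_cosh_le {x : ℝ} (hx : 0 ≤ x) :
    x * Real.cosh x ≤ (1 + x ^ 2 / 3) * Real.sinh x := by
  have hd : ∀ y : ℝ, HasDerivAt (fun z => (1 + z ^ 2 / 3) * Real.sinh z - z * Real.cosh z)
      (y / 3 * (y * Real.cosh y - Real.sinh y)) y := by
    intro y
    have h0 : HasDerivAt (fun z : ℝ => 1 + z ^ 2 / 3) (2 * y / 3) y := by
      have := ((hasDerivAt_pow 2 y).div_const 3).const_add 1
      refine this.congr_deriv ?_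
      ring
    have h1 := h0.mul (Real.hasDerivAt_sinh y)
    have h2 := h1.sub ((hasDerivAt_id y).mul (Real.hasDerivAt_cosh y))
    refine h2.congr_deriv ?_
    simp [mul_comm]; try ring
  have hmono : MonotoneOn (fun z => (1 + z ^ 2 / 3) * Real.sinh z - z * Real.cosh z) (Ici 0) := by
    apply monotoneOn_of_deriv_nonneg (convex_Ici 0)
    · exact (Continuous.sub ((continuous_const.add ((continuous_pow 2).div_const 3)).mul
        Real.continuous_sinh) (continuous_id.mul Real.continuous_cosh)).continuousOn
    · exact fun y _ => (hd y).differentiableAt.differentiableWithinAt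
    · intro y hy
      rw [interior_Ici, mem_Ioi] at hy
      rw [(hd y).deriv]
      have := WLR.sinh_le_mul_cosh hy.le
      have : 0 ≤ y * Real.cosh y - Real.sinh y := by linarith
      positivity
  have := hmono self_mem_Ici hx hx
  simp only [Real.sinh_zero, Real.cosh_zero] at this
  linarith [this]

lemma WLR.ki1 {u v : ℝ} (hv : 0 < v) (huv : v ≤ u) :
    v * Real.cosh v * Real.sinh u ≤ u * Real.cosh u * Real.sinh v := by
  have h := WLR.L1 (p := u - v) (q := u + v) (by linarith) (by linarith)
  rw [Real.sinh_sub, Real.sinh_add] at h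
  nlinarith [h]

lemma WLR.ki2 {u v : ℝ} (hu : 0 < u) (huv : u ≤ v) :
    (u - v) * (Real.sinh u * Real.sinh v) ≤
      u * Real.cosh u * Real.sinh v - v * Real.cosh v * Real.sinh u := by
  have h := WLR.L2 (p := 2 * u) (q := 2 * v) (by linarith) (by linarith)
  have hx : Real.exp (2 * u) = Real.exp u ^ 2 := by
    rw [two_mul, Real.exp_add]; ring
  have hy : Real.exp (2 * v) = Real.exp v ^ 2 := by
    rw [two_mul, Real.exp_add]; ring
  rw [hx, hy] at h
  have hxp : (0:ℝ) < Real.exp u := Real.exp_pos u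
  have hyp : (0:ℝ) < Real.exp v := Real.exp_pos v
  rw [Real.sinh_eq, Real.sinh_eq, Real.cosh_eq, Real.cosh_eq, Real.exp_neg, Real.exp_neg]
  set x := Real.exp u
  set y := Real.exp v
  have hkey : u * ((x + x⁻¹)/2) * ((y - y⁻¹)/2) - v * ((y + y⁻¹)/2) * ((x - x⁻¹)/2)
      - (u - v) * ((x - x⁻¹)/2 * ((y - y⁻¹)/2))
      = (x*y)⁻¹ / 4 * (2*u*(y^2 - 1) - 2*v*(x^2 - 1)) := by
    field_simp
    ring
  have h3 : (0:ℝ) ≤ 2*u*(y^2 - 1) - 2*v*(x^2 - 1) := by linarith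
  have h2 : 0 ≤ (x*y)⁻¹ / 4 * (2*u*(y^2 - 1) - 2*v*(x^2 - 1)) := by
    apply mul_nonneg (by positivity) h3
  linarith [hkey, h2]

/-- Auxiliary expression controlling the sign of the derivative of the likelihood ratio. -/
noncomputable def WLR.coreN (A B δ t : ℝ) : ℝ :=
  δ * Real.sinh (A*t) * Real.sinh (B*t) + A * Real.cosh (A*t) * Real.sinh (B*t)
    - B * Real.cosh (B*t) * Real.sinh (A*t)

lemma WLR.hasDerivAt_core (A B δ C : ℝ) {t : ℝ} (ht : 0 < t) (hB : 0 < B) :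
    HasDerivAt (fun s => C * Real.exp (δ*s) * Real.sinh (A*s) / Real.sinh (B*s))
      (C * Real.exp (δ*t) * WLR.coreN A B δ t / Real.sinh (B*t)^2) t := by
  have hsB : Real.sinh (B*t) ≠ 0 := ne_of_gt (by positivity)
  have h1 : HasDerivAt (fun s : ℝ => δ * s) δ t := by
    simpa using (hasDerivAt_id t).const_mul δ
  have h2 : HasDerivAt (fun s : ℝ => Real.exp (δ*s)) (Real.exp (δ*t) * δ) t := h1.exp
  have hA1 : HasDerivAt (fun s : ℝ => A * s) A t := by
    simpa using (hasDerivAt_id t).const_mul A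
  have h3 : HasDerivAt (fun s : ℝ => Real.sinh (A*s)) (Real.cosh (A*t) * A) t := hA1.sinh
  have hB1 : HasDerivAt (fun s : ℝ => B * s) B t := by
    simpa using (hasDerivAt_id t).const_mul B
  have h4 : HasDerivAt (fun s : ℝ => Real.sinh (B*s)) (Real.cosh (B*t) * B) t := hB1.sinh
  have hu : HasDerivAt (fun s : ℝ => C * Real.exp (δ*s) * Real.sinh (A*s))
      ((C * (Real.exp (δ*t) * δ)) * Real.sinh (A*t)
        + (C * Real.exp (δ*t)) * (Real.cosh (A*t) * A)) t :=
    (h2.const_mul C).mul h3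
  have hf := hu.div h4 hsB
  refine hf.congr_deriv ?_
  rw [WLR.coreN]
  field_simp

lemma WLR.deriv_nonneg_of_monotoneOn {f : ℝ → ℝ} {f' t : ℝ} (ht : t ∈ Set.Ioi (0:ℝ))
    (hm : MonotoneOn f (Set.Ioi 0)) (hd : HasDerivAt f f' t) : 0 ≤ f' := by
  have h1 : Tendsto (slope f t) (𝓝[>] t) (𝓝 f') :=
    (hasDerivAt_iff_tendsto_slope.1 hd).mono_left
      (nhdsWithin_mono t fun x hx => ne_of_gt hx)
  refine ge_of_tendsto h1 ?_
  filter_upwards [self_mem_nhdsWithin] with x hx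
  have htx : t < x := hx
  have ht0 : (0:ℝ) < t := ht
  rw [slope_def_field]
  apply div_nonneg
  · exact sub_nonneg.2 (hm ht (by simp only [mem_Ioi]; linarith) htx.le)
  · linarith

lemma WLR.coreN_nonneg_of_max {A B δ : ℝ} (hA : 0 < A) (hB : 0 < B)
    (hδ : max (B - A) 0 ≤ δ) {t : ℝ} (ht : 0 < t) : 0 ≤ WLR.coreN A B δ t := by
  rw [max_le_iff] at hδ
  obtain ⟨h1, h2⟩ := hδ
  have sA : 0 < Real.sinh (A*t) := by positivity
  have sB : 0 < Real.sinh (B*t) := by positivity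
  rw [WLR.coreN]
  rcases le_total B A with hBA | hAB
  · have k := WLR.ki1 (u := A*t) (v := B*t) (by positivity) (by nlinarith)
    nlinarith [k, ht, mul_nonneg (mul_nonneg (mul_nonneg h2 ht.le) sA.le) sB.le]
  · have k := WLR.ki2 (u := A*t) (v := B*t) (by positivity) (by nlinarith)
    nlinarith [k, ht, mul_nonneg (mul_nonneg (sub_nonneg.2 h1) ht.le)
      (mul_pos sA sB).le]

lemma WLR.delta_nonneg {A B δ : ℝ} (hA : 0 < A) (hB : 0 < B)
    (hN : ∀ t : ℝ, 0 < t → 0 ≤ WLR.coreN A B δ t) : 0 ≤ δ := by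
  by_contra hcon
  push_neg at hcon
  set t : ℝ := 3 * (-δ) / (2 * A^2) with htd
  have ht : 0 < t := by apply div_pos (by linarith) (by positivity)
  have hN' := hN t ht
  rw [WLR.coreN] at hN'
  have sA : 0 < Real.sinh (A*t) := by positivity
  have sB : 0 < Real.sinh (B*t) := by positivity
  have e1 : A*t*Real.cosh (A*t) * Real.sinh (B*t)
      ≤ (1 + (A*t)^2/3) * Real.sinh (A*t) * Real.sinh (B*t) :=
    mul_le_mul_of_nonneg_right (WLR.mul_cosh_le (by positivity)) sB.le
  have e2 : Real.sinh (B*t) * Real.sinh (A*t)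
      ≤ B*t*Real.cosh (B*t) * Real.sinh (A*t) :=
    mul_le_mul_of_nonneg_right (WLR.sinh_le_mul_cosh (by positivity)) sA.le
  have htv : δ + A^2*t/3 = δ/2 := by
    rw [htd]; field_simp; ring
  have hlt : δ*t + A^2*t^2/3 < 0 := by nlinarith [ht, hcon, htv]
  nlinarith [hN', e1, e2, hlt, sA, sB, ht, mul_pos sA sB]

lemma WLR.coth_tendsto {A : ℝ} (hA : 0 < A) :
    Tendsto (fun t => Real.cosh (A*t) / Real.sinh (A*t)) atTop (𝓝 1) := by
  have h2A : Tendsto (fun t : ℝ => Real.exp (-(2*A*t))) atTop (𝓝 0) := by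
    apply Real.tendsto_exp_atBot.comp
    exact tendsto_neg_atTop_atBot.comp (tendsto_id.const_mul_atTop (by positivity))
  have hdiv : Tendsto (fun t : ℝ => (1 + Real.exp (-(2*A*t))) / (1 - Real.exp (-(2*A*t))))
      atTop (𝓝 1) := by
    have hnum : Tendsto (fun t : ℝ => 1 + Real.exp (-(2*A*t))) atTop (𝓝 (1+0)) :=
      tendsto_const_nhds.add h2A
    have hden : Tendsto (fun t : ℝ => 1 - Real.exp (-(2*A*t))) atTop (𝓝 (1-0)) :=
      tendsto_const_nhds.sub h2A
    have := hnum.div hden (by norm_num)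
    simp at this
    exact this
  apply hdiv.congr'
  filter_upwards [eventually_gt_atTop 0] with t ht
  have hx : 0 < A * t := by positivity
  have hX : 1 < Real.exp (A*t) := by
    rw [show (1:ℝ) = Real.exp 0 by simp]
    exact Real.exp_lt_exp.2 hx
  rw [Real.cosh_eq, Real.sinh_eq, show -(2*A*t) = -(A*t) + -(A*t) by ring,
    Real.exp_add, Real.exp_neg]
  set X := Real.exp (A*t)
  have h0 : X ≠ 0 := by positivity
  have hinv : X⁻¹ < 1 := by
    rw [inv_lt_one_iff₀]; right; exact hX
  have hne1 : X - X⁻¹ ≠ 0 := by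
    have : X⁻¹ < X := lt_trans hinv hX
    exact ne_of_gt (by linarith)
  have hne2 : 1 - X⁻¹ * X⁻¹ ≠ 0 := by
    have h1 : X⁻¹ * X⁻¹ < 1 := by nlinarith [inv_pos.2 (lt_trans one_pos hX : (0:ℝ) < X)]
    exact ne_of_gt (by linarith)
  field_simp
  try ring

lemma WLR.delta_ge {A B δ : ℝ} (hA : 0 < A) (hB : 0 < B)
    (hN : ∀ t : ℝ, 0 < t → 0 ≤ WLR.coreN A B δ t) : B - A ≤ δ := by
  set G : ℝ → ℝ := fun t => δ + A * (Real.cosh (A*t) / Real.sinh (A*t))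
    - B * (Real.cosh (B*t) / Real.sinh (B*t)) with hGdef
  have hGpos : ∀ t : ℝ, 0 < t → 0 ≤ G t := by
    intro t ht
    have sA : 0 < Real.sinh (A*t) := by positivity
    have sB : 0 < Real.sinh (B*t) := by positivity
    have : G t = WLR.coreN A B δ t / (Real.sinh (A*t) * Real.sinh (B*t)) := by
      rw [hGdef, WLR.coreN]
      field_simp
    rw [this]
    exact div_nonneg (hN t ht) (by positivity)
  have hlim : Tendsto G atTop (𝓝 (δ + A * 1 - B * 1)) :=
    (tendsto_const_nhds.add ((WLR.coth_tendsto hA).const_mul A)).sub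
      ((WLR.coth_tendsto hB).const_mul B)
  have := ge_of_tendsto hlim (eventually_atTop.2 ⟨1, fun t ht' => hGpos t (by linarith)⟩)
  linarith

lemma WLR.core_iff {A B δ C : ℝ} (hA : 0 < A) (hB : 0 < B) (hC : 0 < C) :
    MonotoneOn (fun t => C * Real.exp (δ*t) * Real.sinh (A*t) / Real.sinh (B*t))
      (Set.Ioi (0:ℝ)) ↔ max (B - A) 0 ≤ δ := by
  constructor
  · intro hm
    have hN : ∀ t : ℝ, 0 < t → 0 ≤ WLR.coreN A B δ t := by
      intro t ht
      have hd := WLR.hasDerivAt_core A B δ C ht hB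
      have h0 := WLR.deriv_nonneg_of_monotoneOn ht hm hd
      by_contra hneg
      push_neg at hneg
      have hsB : 0 < Real.sinh (B*t) := by positivity
      have : C * Real.exp (δ*t) * WLR.coreN A B δ t / Real.sinh (B*t)^2 < 0 :=
        div_neg_of_neg_of_pos (mul_neg_of_pos_of_neg (by positivity) hneg) (by positivity)
      linarith
    rw [max_le_iff]
    exact ⟨WLR.delta_ge hA hB hN, WLR.delta_nonneg hA hB hN⟩
  · intro hδ
    apply monotoneOn_of_deriv_nonneg (convex_Ioi 0)
    · intro t ht
      exact ((WLR.hasDerivAt_core A B δ C ht hB).differentiableAt).continuousAt.continuousWithinAt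
    · intro t ht
      rw [interior_Ioi] at ht
      exact (WLR.hasDerivAt_core A B δ C ht hB).differentiableAt.differentiableWithinAt
    · intro t ht
      rw [interior_Ioi] at ht
      rw [(WLR.hasDerivAt_core A B δ C ht hB).deriv]
      exact div_nonneg (mul_nonneg (by positivity)
        (WLR.coreN_nonneg_of_max hA hB hδ ht)) (sq_nonneg _)

end Aux

theorem warm_lr_iff (l11 l12 l21 l22 m1 m2 : ℝ)
    (h11 : 0 < l11) (h12 : 0 ≤ l12) (h21 : 0 < l21) (h22 : 0 ≤ l22)
    (hm1 : 0 < m1) (hm2 : 0 < m2) :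
    MonotoneOn (fun t : ℝ => phiW l11 l12 m1 t / phiW l21 l22 m2 t) (Set.Ioi (0 : ℝ)) ↔
      2 * (l21 - l11) - l12 + l22 + m2 - m1 ≥ max (aW l21 l22 m2 - aW l11 l12 m1) 0 := by
  have ha1 : 0 < aW l11 l12 m1 := Real.sqrt_pos.2 (by positivity)
  have ha2 : 0 < aW l21 l22 m2 := Real.sqrt_pos.2 (by positivity)
  set a1 := aW l11 l12 m1
  set a2 := aW l21 l22 m2
  have hA : 0 < a1 / 2 := by positivity
  have hB : 0 < a2 / 2 := by positivity
  have hC : 0 < (2 * l11 * (l11 + l12) / a1) / (2 * l21 * (l21 + l22) / a2) := by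
    have h1 : 0 < 2 * l11 * (l11 + l12) / a1 := by positivity
    have h2 : 0 < 2 * l21 * (l21 + l22) / a2 := by positivity
    positivity
  have hfun : (fun t : ℝ => phiW l11 l12 m1 t / phiW l21 l22 m2 t)
      = fun t : ℝ => ((2 * l11 * (l11 + l12) / a1) / (2 * l21 * (l21 + l22) / a2))
        * Real.exp ((((2*l21+l22+m2) - (2*l11+l12+m1))/2) * t)
        * Real.sinh ((a1/2) * t) / Real.sinh ((a2/2) * t) := by
    funext t
    simp only [phiW]
    rw [mul_div_mul_comm, mul_div_mul_comm, ← Real.exp_sub]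
    rw [show -((2*l11+l12+m1)*t/2) - -((2*l21+l22+m2)*t/2)
        = (((2*l21+l22+m2) - (2*l11+l12+m1))/2) * t by ring]
    rw [show a1 * t / 2 = (a1/2) * t by ring, show a2 * t / 2 = (a2/2) * t by ring]
    ring
  rw [hfun, WLR.core_iff hA hB hC, ge_iff_le, max_le_iff, max_le_iff]
  constructor <;> intro h <;> exact ⟨by linarith [h.1, h.2], by linarith [h.1, h.2]⟩
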